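/- Let U ⊆ ℝ_t × ℝ²_x be open, let h and v¹, v² be C² on U with h > 0, and suppose they solve the 2D rotating shallow water system B h = −h div v, B v¹ = v² − ∂₁h, B v² = −v¹ − ∂₂h on U. Then ρ = ln h satisfies the identity B²ρ = −ε_{ij}∂_i v^j + ∂_i v^j ∂_j v^i + e^{ρ} Δρ + e^{ρ} (∂₁ρ)² + e^{ρ} (∂₂ρ)² on U, where Δ = ∂₁² + ∂₂² and the indices i, j are summed over {1,2}. -/

import Mathlib

/-- Partial derivative in the `i`-th coordinate direction of spacetime
`ℝ_t × ℝ²_x ≃ (Fin 3 → ℝ)`, coordinates `(x⁰, x¹, x²) = (t, x₁, x₂)`. -/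
noncomputable def pd (i : Fin 3) (f : (Fin 3 → ℝ) → ℝ) (x : Fin 3 → ℝ) : ℝ :=
  fderiv ℝ f x (Pi.single i 1)

/-- Material derivative `B = ∂ₜ + v¹∂₁ + v²∂₂`. -/
noncomputable def matD (v1 v2 f : (Fin 3 → ℝ) → ℝ) (x : Fin 3 → ℝ) : ℝ :=
  pd 0 f x + v1 x * pd 1 f x + v2 x * pd 2 f x

section helpers
variable {f g : (Fin 3 → ℝ) → ℝ} {x : Fin 3 → ℝ} {i j : Fin 3}

lemma pd_congr_nhds (hfg : f =ᶠ[nhds x] g) : pd i f x = pd i g x := by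
  unfold pd; rw [hfg.fderiv_eq]

lemma pd_add (hf : DifferentiableAt ℝ f x) (hg : DifferentiableAt ℝ g x) :
    pd i (fun y => f y + g y) x = pd i f x + pd i g x := by
  unfold pd; rw [fderiv_fun_add hf hg]; simp

lemma pd_neg : pd i (fun y => -f y) x = -pd i f x := by
  unfold pd; rw [fderiv_fun_neg]; simp

lemma pd_sub (hf : DifferentiableAt ℝ f x) (hg : DifferentiableAt ℝ g x) :
    pd i (fun y => f y - g y) x = pd i f x - pd i g x := by
  unfold pd; rw [fderiv_fun_sub hf hg]; simp

lemma pd_mul (hf : DifferentiableAt ℝ f x) (hg : DifferentiableAt ℝ g x) :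
    pd i (fun y => f y * g y) x = f x * pd i g x + pd i f x * g x := by
  unfold pd; rw [fderiv_fun_mul hf hg]; simp [mul_comm]

lemma pd_inv (hg : DifferentiableAt ℝ g x) (hgx : g x ≠ 0) :
    pd i (fun y => (g y)⁻¹) x = -pd i g x / (g x) ^ 2 := by
  unfold pd
  have : (fun y => (g y)⁻¹) = (fun y => y⁻¹) ∘ g := rfl
  rw [this, ((hasDerivAt_inv hgx).comp_hasFDerivAt x hg.hasFDerivAt).fderiv]
  simp [smul_eq_mul]
  ring

lemma pd_log (hf : DifferentiableAt ℝ f x) (hfx : f x ≠ 0) :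
    pd i (fun y => Real.log (f y)) x = pd i f x / f x := by
  unfold pd
  rw [(hf.hasFDerivAt.log hfx).fderiv]
  simp [div_eq_inv_mul]

lemma pd_diff (hf : ContDiffAt ℝ 2 f x) : DifferentiableAt ℝ (pd j f) x := by
  have h1 : ContDiffAt ℝ 1 (fderiv ℝ f) x := hf.fderiv_right (le_refl 2)
  have := ((ContinuousLinearMap.apply ℝ ℝ (Pi.single j 1 : Fin 3 → ℝ)).differentiableAt).comp x
    (h1.differentiableAt one_ne_zero)
  exact this

lemma pd_pd (hf : ContDiffAt ℝ 2 f x) :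
    pd i (pd j f) x = fderiv ℝ (fderiv ℝ f) x (Pi.single i 1) (Pi.single j 1) := by
  have h1 : DifferentiableAt ℝ (fderiv ℝ f) x :=
    (hf.fderiv_right (m := 1) (le_refl 2)).differentiableAt one_ne_zero
  have hc := ((ContinuousLinearMap.apply ℝ ℝ (Pi.single j 1 : Fin 3 → ℝ)).hasFDerivAt).comp x
    h1.hasFDerivAt
  have : pd j f = (ContinuousLinearMap.apply ℝ ℝ (Pi.single j 1 : Fin 3 → ℝ)) ∘ (fderiv ℝ f) := rfl
  rw [show pd i (pd j f) x = fderiv ℝ (pd j f) x (Pi.single i 1) from rfl, this, hc.fderiv]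
  simp

lemma pd_comm (hf : ContDiffAt ℝ 2 f x) : pd i (pd j f) x = pd j (pd i f) x := by
  rw [pd_pd hf, pd_pd hf]
  exact hf.isSymmSndFDerivAt (by simp [minSmoothness_of_isRCLikeNormedField]) _ _

end helpers

lemma pd_matD_expand {v1 v2 f : (Fin 3 → ℝ) → ℝ} {x : Fin 3 → ℝ} (i : Fin 3)
    (hv1 : DifferentiableAt ℝ v1 x) (hv2 : DifferentiableAt ℝ v2 x)
    (hf : ContDiffAt ℝ 2 f x) :
    pd i (matD v1 v2 f) x
      = pd i (pd 0 f) x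
        + (v1 x * pd i (pd 1 f) x + pd i v1 x * pd 1 f x)
        + (v2 x * pd i (pd 2 f) x + pd i v2 x * pd 2 f x) := by
  have hrw : matD v1 v2 f
      = fun y => (pd 0 f y + v1 y * pd 1 f y) + v2 y * pd 2 f y := rfl
  rw [hrw, pd_add (f := fun y => pd 0 f y + v1 y * pd 1 f y) (g := fun y => v2 y * pd 2 f y) ((pd_diff hf).add (hv1.mul (pd_diff hf))) (hv2.mul (pd_diff hf)),
    pd_add (f := pd 0 f) (g := fun y => v1 y * pd 1 f y) (pd_diff hf) (hv1.mul (pd_diff hf)), pd_mul hv1 (pd_diff hf),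
    pd_mul hv2 (pd_diff hf)]


/-- For `C²` solutions (with `h > 0`) of the 2D rotating shallow water system on an open
set `U`, the logarithmic height `ρ = ln h` satisfies
`B²ρ = −ε_{ij}∂_i v^j + ∂_i v^j ∂_j v^i + e^ρ Δρ + e^ρ (∂₁ρ)² + e^ρ (∂₂ρ)²` on `U`,
where `ε_{ij}` is the antisymmetric symbol (`ε₁₂ = 1`), repeated indices are summed over
`{1,2}`, and `Δ = ∂₁² + ∂₂²`. -/
theorem second_material_derivative_of_log_height
    (U : Set (Fin 3 → ℝ)) (hU : IsOpen U)
    (h v1 v2 : (Fin 3 → ℝ) → ℝ)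
    (hh : ContDiffOn ℝ 2 h U)
    (hv1 : ContDiffOn ℝ 2 v1 U) (hv2 : ContDiffOn ℝ 2 v2 U)
    (hpos : ∀ x ∈ U, 0 < h x)
    (hmass : ∀ x ∈ U, matD v1 v2 h x = -(h x) * (pd 1 v1 x + pd 2 v2 x))
    (hmom1 : ∀ x ∈ U, matD v1 v2 v1 x = v2 x - pd 1 h x)
    (hmom2 : ∀ x ∈ U, matD v1 v2 v2 x = -v1 x - pd 2 h x) :
    ∀ x ∈ U,
      matD v1 v2 (matD v1 v2 (fun y => Real.log (h y))) x
        = -(pd 1 v2 x - pd 2 v1 x)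
          + (pd 1 v1 x * pd 1 v1 x + pd 1 v2 x * pd 2 v1 x
              + pd 2 v1 x * pd 1 v2 x + pd 2 v2 x * pd 2 v2 x)
          + Real.exp (Real.log (h x))
              * (pd 1 (pd 1 (fun y => Real.log (h y))) x
                  + pd 2 (pd 2 (fun y => Real.log (h y))) x)
          + Real.exp (Real.log (h x)) * (pd 1 (fun y => Real.log (h y)) x) ^ 2
          + Real.exp (Real.log (h x)) * (pd 2 (fun y => Real.log (h y)) x) ^ 2 := by
  intro x hx
  set ρ : (Fin 3 → ℝ) → ℝ := fun y => Real.log (h y) with hρ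
  -- basic regularity facts
  have cdh : ∀ y ∈ U, ContDiffAt ℝ 2 h y := fun y hy => hh.contDiffAt (hU.mem_nhds hy)
  have cd1 : ∀ y ∈ U, ContDiffAt ℝ 2 v1 y := fun y hy => hv1.contDiffAt (hU.mem_nhds hy)
  have cd2 : ∀ y ∈ U, ContDiffAt ℝ 2 v2 y := fun y hy => hv2.contDiffAt (hU.mem_nhds hy)
  have dh : ∀ y ∈ U, DifferentiableAt ℝ h y :=
    fun y hy => (cdh y hy).differentiableAt two_ne_zero
  have d1 : ∀ y ∈ U, DifferentiableAt ℝ v1 y :=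
    fun y hy => (cd1 y hy).differentiableAt two_ne_zero
  have d2 : ∀ y ∈ U, DifferentiableAt ℝ v2 y :=
    fun y hy => (cd2 y hy).differentiableAt two_ne_zero
  have hne : ∀ y ∈ U, h y ≠ 0 := fun y hy => ne_of_gt (hpos y hy)
  -- first equation for ρ on U
  have ρeq : ∀ y ∈ U, matD v1 v2 ρ y = -(pd 1 v1 y + pd 2 v2 y) := by
    intro y hy
    have hl : ∀ i : Fin 3, pd i ρ y = pd i h y / h y :=
      fun i => pd_log (dh y hy) (hne y hy)
    have hm := hmass y hy
    unfold matD at hm ⊢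
    rw [hl 0, hl 1, hl 2]
    have hr : pd 0 h y / h y + v1 y * (pd 1 h y / h y) + v2 y * (pd 2 h y / h y)
        = (pd 0 h y + v1 y * pd 1 h y + v2 y * pd 2 h y) / h y := by ring
    rw [hr, hm, neg_mul, neg_div, mul_div_cancel_left₀ _ (hne y hy)]
  -- second derivative key identity
  have key : ∀ i : Fin 3, pd i (matD v1 v2 ρ) x
      = -(pd i (pd 1 v1) x + pd i (pd 2 v2) x) := by
    intro i
    have ev : matD v1 v2 ρ =ᶠ[nhds x] fun y => -(pd 1 v1 y + pd 2 v2 y) :=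
      Filter.eventuallyEq_of_mem (hU.mem_nhds hx) (fun y hy => ρeq y hy)
    rw [pd_congr_nhds ev, pd_neg (f := fun y => pd 1 v1 y + pd 2 v2 y),
      pd_add (pd_diff (cd1 x hx)) (pd_diff (cd2 x hx))]
  -- momentum equations differentiated
  have eqA : pd 0 (pd 1 v1) x + v1 x * pd 1 (pd 1 v1) x + v2 x * pd 2 (pd 1 v1) x
      = pd 1 v2 x - pd 1 (pd 1 h) x - pd 1 v1 x * pd 1 v1 x - pd 1 v2 x * pd 2 v1 x := by
    have ev : matD v1 v2 v1 =ᶠ[nhds x] fun y => v2 y - pd 1 h y :=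
      Filter.eventuallyEq_of_mem (hU.mem_nhds hx) (fun y hy => hmom1 y hy)
    have e1 := pd_matD_expand (v1 := v1) (v2 := v2) 1 (d1 x hx) (d2 x hx) (cd1 x hx)
    rw [pd_congr_nhds ev, pd_sub (d2 x hx) (pd_diff (cdh x hx))] at e1
    rw [pd_comm (cd1 x hx) (i := 1) (j := 0), pd_comm (cd1 x hx) (i := 1) (j := 2)] at e1
    linarith [e1]
  have eqB : pd 0 (pd 2 v2) x + v1 x * pd 1 (pd 2 v2) x + v2 x * pd 2 (pd 2 v2) x
      = -pd 2 v1 x - pd 2 (pd 2 h) x - pd 2 v1 x * pd 1 v2 x - pd 2 v2 x * pd 2 v2 x := by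
    have ev : matD v1 v2 v2 =ᶠ[nhds x] fun y => -v1 y - pd 2 h y :=
      Filter.eventuallyEq_of_mem (hU.mem_nhds hx) (fun y hy => hmom2 y hy)
    have e1 := pd_matD_expand (v1 := v1) (v2 := v2) 2 (d1 x hx) (d2 x hx) (cd2 x hx)
    rw [pd_congr_nhds ev, pd_sub (f := fun y => -v1 y) (d1 x hx).neg (pd_diff (cdh x hx)),
      pd_neg (f := v1)] at e1
    rw [pd_comm (cd2 x hx) (i := 2) (j := 0), pd_comm (cd2 x hx) (i := 2) (j := 1)] at e1
    linarith [e1]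
  -- first and second derivatives of ρ at x
  have ρ1 : ∀ i : Fin 3, pd i ρ x = pd i h x / h x :=
    fun i => pd_log (dh x hx) (hne x hx)
  have ρ2 : ∀ i : Fin 3, pd i (pd i ρ) x
      = pd i h x * (-pd i h x / (h x) ^ 2) + pd i (pd i h) x * (h x)⁻¹ := by
    intro i
    have ev : pd i ρ =ᶠ[nhds x] fun y => pd i h y * (h y)⁻¹ :=
      Filter.eventuallyEq_of_mem (hU.mem_nhds hx)
        (fun y hy => by rw [pd_log (dh y hy) (hne y hy), div_eq_mul_inv])
    rw [pd_congr_nhds ev,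
      pd_mul (g := fun y => (h y)⁻¹) (pd_diff (cdh x hx)) ((dh x hx).inv (hne x hx)),
      pd_inv (dh x hx) (hne x hx)]
  -- assemble
  have lhs : matD v1 v2 (matD v1 v2 ρ) x
      = -(pd 0 (pd 1 v1) x + pd 0 (pd 2 v2) x)
        + v1 x * -(pd 1 (pd 1 v1) x + pd 1 (pd 2 v2) x)
        + v2 x * -(pd 2 (pd 1 v1) x + pd 2 (pd 2 v2) x) := by
    show pd 0 (matD v1 v2 ρ) x + v1 x * pd 1 (matD v1 v2 ρ) x
        + v2 x * pd 2 (matD v1 v2 ρ) x = _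
    rw [key 0, key 1, key 2]
  have hne' : h x ≠ 0 := hne x hx
  have e3 : h x * (pd 1 (pd 1 ρ) x + pd 2 (pd 2 ρ) x)
        + h x * (pd 1 ρ x) ^ 2 + h x * (pd 2 ρ x) ^ 2
      = pd 1 (pd 1 h) x + pd 2 (pd 2 h) x := by
    rw [ρ1 1, ρ1 2, ρ2 1, ρ2 2]
    field_simp
    ring
  rw [lhs, Real.exp_log (hpos x hx)]
  linear_combination -eqA - eqB - e3
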